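/- Let H be a Hopf algebra with antipode τ over a field k and A a left H-module algebra. The map a ⊗ b ⋈ h ↦ a ⊙ h₍₁₎ ⊙ (h₍₂₎▷b) is an algebra isomorphism from A^e ⋈ H (multiplication (a⊗b⋈h)(c⊗d⋈k) = a(h₍₁₎▷c) ⊗ d(τ(k₍₂₎)▷b) ⋈ h₍₂₎k₍₁₎) to A ⊙ H ⊙ A (multiplication (a⊙h⊙b)(c⊙k⊙d) = a(h₍₁₎▷c) ⊙ h₍₂₎k ⊙ (h₍₃₎▷d)b), with inverse a ⊙ h ⊙ b ↦ a ⊗ (τ(h₍₂₎)▷b) ⋈ h₍₁₎. -/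

import Mathlib

/-!
STATEMENT 14: Let `H` be a Hopf algebra with antipode `τ` over a field `k` and `A`
a left `H`-module algebra.  The map `a ⊗ b ⋈ h ↦ a ⊙ h₍₁₎ ⊙ (h₍₂₎▷b)` is an
algebra isomorphism `A^e ⋈ H ≅ A ⊙ H ⊙ A`, with inverse
`a ⊙ h ⊙ b ↦ a ⊗ (τ(h₍₂₎)▷b) ⋈ h₍₁₎`.
-/

open scoped TensorProduct
open Coalgebra HopfAlgebra

set_option synthInstance.maxHeartbeats 1000000
set_option maxHeartbeats 4000000

noncomputable section

variable (k H A : Type*) [Field k] [Ring H] [HopfAlgebra k H] [Ring A] [Algebra k A]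

variable (act : H →ₗ[k] A →ₗ[k] A)

/-- `h ⊗ b ↦ h₍₁₎ ⊗ (h₍₂₎ ▷ b)`. -/
def innerPsi : H ⊗[k] A →ₗ[k] H ⊗[k] A :=
  (LinearMap.lTensor H (TensorProduct.lift act)).comp
    (((TensorProduct.assoc k H H A).toLinearMap).comp
      (LinearMap.rTensor A (Coalgebra.comul (R := k) (A := H))))

/-- `Ψ : a ⊗ b ⋈ h ↦ a ⊙ h₍₁₎ ⊙ (h₍₂₎ ▷ b)`, as a map `A⊗A⊗H → A⊗H⊗A`. -/
def PsiMap : A ⊗[k] (A ⊗[k] H) →ₗ[k] A ⊗[k] (H ⊗[k] A) :=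
  (LinearMap.lTensor A (innerPsi k H A act)).comp
    (LinearMap.lTensor A ((TensorProduct.comm k A H).toLinearMap))

/-- `h ⊗ b ↦ (τ(h₍₂₎) ▷ b) ⊗ h₍₁₎`. -/
def innerPhi : H ⊗[k] A →ₗ[k] A ⊗[k] H :=
  (LinearMap.rTensor H (TensorProduct.lift act)).comp
    (((TensorProduct.assoc k H A H).symm.toLinearMap).comp
      ((LinearMap.lTensor H ((TensorProduct.comm k H A).toLinearMap)).comp
        (((TensorProduct.assoc k H H A).toLinearMap).comp
          ((LinearMap.rTensor A (LinearMap.rTensor H (antipode (R := k)))).comp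
            ((LinearMap.rTensor A ((TensorProduct.comm k H H).toLinearMap)).comp
              (LinearMap.rTensor A (Coalgebra.comul (R := k) (A := H))))))))

/-- The inverse map `a ⊙ h ⊙ b ↦ a ⊗ (τ(h₍₂₎) ▷ b) ⋈ h₍₁₎`. -/
def PhiMap : A ⊗[k] (H ⊗[k] A) →ₗ[k] A ⊗[k] (A ⊗[k] H) :=
  LinearMap.lTensor A (innerPhi k H A act)

/-! ### Auxiliary material for the proof -/

section AuxGen
variable {R M N P : Type*} [CommSemiring R] [AddCommMonoid M] [AddCommMonoid N] [AddCommMonoid P]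
  [Module R M] [Module R N] [Module R P]

lemma exists_fin_rep (x : M ⊗[R] N) :
    ∃ (n : ℕ) (f : Fin n → M) (g : Fin n → N), x = ∑ i, f i ⊗ₜ[R] g i := by
  induction x using TensorProduct.induction_on with
  | zero => exact ⟨0, finZeroElim, finZeroElim, by simp⟩
  | tmul m n => exact ⟨1, fun _ => m, fun _ => n, by simp⟩
  | add x y hx hy =>
      obtain ⟨n₁, f₁, g₁, h₁⟩ := hx
      obtain ⟨n₂, f₂, g₂, h₂⟩ := hy
      refine ⟨n₁ + n₂, Fin.append f₁ f₂, Fin.append g₁ g₂, ?_⟩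
      rw [h₁, h₂, Fin.sum_univ_add]
      congr 1
      · exact Finset.sum_congr rfl fun i _ => by rw [Fin.append_left, Fin.append_left]
      · exact Finset.sum_congr rfl fun i _ => by rw [Fin.append_right, Fin.append_right]

lemma exists_fin_rep₃ (x : M ⊗[R] (N ⊗[R] P)) :
    ∃ (n : ℕ) (f : Fin n → M) (g : Fin n → N) (h : Fin n → P),
      x = ∑ i, f i ⊗ₜ[R] (g i ⊗ₜ[R] h i) := by
  induction x using TensorProduct.induction_on with
  | zero => exact ⟨0, finZeroElim, finZeroElim, finZeroElim, by simp⟩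
  | tmul m y =>
      obtain ⟨n, g, h, hy⟩ := exists_fin_rep y
      exact ⟨n, fun _ => m, g, h, by rw [hy, TensorProduct.tmul_sum]⟩
  | add x y hx hy =>
      obtain ⟨n₁, f₁, g₁, h₁, e₁⟩ := hx
      obtain ⟨n₂, f₂, g₂, h₂, e₂⟩ := hy
      refine ⟨n₁ + n₂, Fin.append f₁ f₂, Fin.append g₁ g₂, Fin.append h₁ h₂, ?_⟩
      rw [e₁, e₂, Fin.sum_univ_add]
      congr 1
      · exact Finset.sum_congr rfl fun i _ => by
          rw [Fin.append_left, Fin.append_left, Fin.append_left]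
      · exact Finset.sum_congr rfl fun i _ => by
          rw [Fin.append_right, Fin.append_right, Fin.append_right]
end AuxGen

lemma counit_smul_sum {ι : Type*} (s : Finset ι) (L R : ι → H) (h : H)
    (hr : Coalgebra.comul (R := k) h = ∑ i ∈ s, L i ⊗ₜ[k] R i) :
    ∑ i ∈ s, Coalgebra.counit (R := k) (R i) • L i = h := by
  have h1 := Coalgebra.lTensor_counit_comul (R := k) h
  rw [hr, map_sum] at h1
  simp only [LinearMap.lTensor_tmul] at h1
  have h2 := congrArg (TensorProduct.rid k H) h1
  rw [map_sum] at h2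
  simpa [TensorProduct.rid_tmul] using h2

/-- `h ↦ h₍₁₎ ⊗ (h₍₂₎ ⊗ h₍₃₎)`. -/
def D2Map : H →ₗ[k] H ⊗[k] (H ⊗[k] H) :=
  (LinearMap.lTensor H (Coalgebra.comul (R := k) (A := H))).comp (Coalgebra.comul (R := k))

/-- Reassociation `(x ⊗ (y ⊗ z)) ⊗ w ↦ x ⊗ (y ⊗ (z ⊗ w))`. -/
def BetaMap : (H ⊗[k] (H ⊗[k] H)) ⊗[k] H →ₗ[k] H ⊗[k] (H ⊗[k] (H ⊗[k] H)) :=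
  (LinearMap.lTensor H (TensorProduct.assoc k H H H).toLinearMap).comp
    (TensorProduct.assoc k H (H ⊗[k] H) H).toLinearMap

lemma BetaMap_tmul (x : H) (y : H ⊗[k] H) (z : H) :
    BetaMap k H ((x ⊗ₜ[k] y) ⊗ₜ[k] z) = x ⊗ₜ[k] (TensorProduct.assoc k H H H (y ⊗ₜ[k] z)) := by
  simp [BetaMap]

lemma beta_rT_lT :
    (BetaMap k H).comp
        (LinearMap.rTensor H (LinearMap.lTensor H (Coalgebra.comul (R := k) (A := H)))) =
      (LinearMap.lTensor H ((TensorProduct.assoc k H H H).toLinearMap.comp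
          (LinearMap.rTensor H (Coalgebra.comul (R := k) (A := H))))).comp
        (TensorProduct.assoc k H H H).toLinearMap := by
  apply TensorProduct.ext_threefold
  intro x y z
  simp [BetaMap]

lemma coassoc4 (x : H) :
    BetaMap k H ((LinearMap.rTensor H (D2Map k H)) (Coalgebra.comul (R := k) x)) =
      (LinearMap.lTensor H (D2Map k H)) (Coalgebra.comul (R := k) x) := by
  have h1 : LinearMap.rTensor H (D2Map k H) =
      (LinearMap.rTensor H (LinearMap.lTensor H (Coalgebra.comul (R := k) (A := H)))).comp
        (LinearMap.rTensor H (Coalgebra.comul (R := k) (A := H))) := by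
    rw [D2Map, LinearMap.rTensor_comp]
  rw [h1, LinearMap.comp_apply, ← LinearMap.comp_apply (BetaMap k H), beta_rT_lT]
  simp only [LinearMap.comp_apply, LinearEquiv.coe_coe]
  rw [Coalgebra.coassoc_apply, ← LinearMap.comp_apply, ← LinearMap.lTensor_comp]
  congr 1
  rw [LinearMap.comp_assoc, Coalgebra.coassoc]
  rfl

lemma triple_left (h : H) :
    ∑ i ∈ (ℛ k h).index, ∑ j ∈ (ℛ k ((ℛ k h).left i)).index,
      (ℛ k ((ℛ k h).left i)).left j ⊗ₜ[k]
        ((ℛ k ((ℛ k h).left i)).right j ⊗ₜ[k] (ℛ k h).right i)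
      = (LinearMap.lTensor H (Coalgebra.comul (R := k))) (Coalgebra.comul (R := k) h) := by
  rw [← Coalgebra.coassoc_apply]
  have e : (LinearMap.rTensor H (Coalgebra.comul (R := k))) (Coalgebra.comul (R := k) h) =
      ∑ i ∈ (ℛ k h).index,
        (Coalgebra.comul (R := k) ((ℛ k h).left i)) ⊗ₜ[k] (ℛ k h).right i := by
    rw [← (ℛ k h).eq, map_sum]
    simp only [LinearMap.rTensor_tmul]
  rw [e, map_sum]
  refine Finset.sum_congr rfl fun i _ => ?_
  rw [← (ℛ k ((ℛ k h).left i)).eq, TensorProduct.sum_tmul, map_sum]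
  exact Finset.sum_congr rfl fun j _ => by rw [TensorProduct.assoc_tmul]

lemma lT_comul_repr (h : H) :
    (LinearMap.lTensor H (Coalgebra.comul (R := k))) (Coalgebra.comul (R := k) h) =
      ∑ i ∈ (ℛ k h).index,
        (ℛ k h).left i ⊗ₜ[k] Coalgebra.comul (R := k) ((ℛ k h).right i) := by
  rw [← (ℛ k h).eq, map_sum]
  simp only [LinearMap.lTensor_tmul]

lemma sweedler_r (h : H) :
    ∑ i ∈ (ℛ k h).index, ∑ j ∈ (ℛ k ((ℛ k h).left i)).index,
      (ℛ k ((ℛ k h).left i)).left j ⊗ₜ[k]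
        (antipode (R := k) ((ℛ k ((ℛ k h).left i)).right j) * (ℛ k h).right i)
      = h ⊗ₜ[k] (1 : H) := by
  have K := congrArg (⇑(LinearMap.lTensor H
      ((LinearMap.mul' k H).comp (LinearMap.rTensor H (antipode (R := k))))))
    (triple_left k H h)
  simp only [map_sum, LinearMap.lTensor_tmul, LinearMap.comp_apply,
    LinearMap.rTensor_tmul, LinearMap.mul'_apply] at K
  rw [K, lT_comul_repr, map_sum]
  have step : ∀ i ∈ (ℛ k h).index,
      (LinearMap.lTensor H ((LinearMap.mul' k H).comp
        (LinearMap.rTensor H (antipode (R := k)))))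
        ((ℛ k h).left i ⊗ₜ[k] Coalgebra.comul (R := k) ((ℛ k h).right i)) =
      (Coalgebra.counit (R := k) ((ℛ k h).right i) • (ℛ k h).left i) ⊗ₜ[k] (1 : H) := by
    intro i _
    rw [LinearMap.lTensor_tmul, LinearMap.comp_apply,
      HopfAlgebra.mul_antipode_rTensor_comul_apply, Algebra.algebraMap_eq_smul_one,
      TensorProduct.tmul_smul, TensorProduct.smul_tmul']
  rw [Finset.sum_congr rfl step, ← TensorProduct.sum_tmul,
    counit_smul_sum k H _ _ _ h (ℛ k h).eq.symm]

lemma sweedler_l (h : H) :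
    ∑ i ∈ (ℛ k h).index, ∑ j ∈ (ℛ k ((ℛ k h).left i)).index,
      (ℛ k ((ℛ k h).left i)).left j ⊗ₜ[k]
        ((ℛ k ((ℛ k h).left i)).right j * antipode (R := k) ((ℛ k h).right i))
      = h ⊗ₜ[k] (1 : H) := by
  have K := congrArg (⇑(LinearMap.lTensor H
      ((LinearMap.mul' k H).comp (LinearMap.lTensor H (antipode (R := k))))))
    (triple_left k H h)
  simp only [map_sum, LinearMap.lTensor_tmul, LinearMap.comp_apply,
    LinearMap.mul'_apply] at K
  rw [K, lT_comul_repr, map_sum]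
  have step : ∀ i ∈ (ℛ k h).index,
      (LinearMap.lTensor H ((LinearMap.mul' k H).comp
        (LinearMap.lTensor H (antipode (R := k)))))
        ((ℛ k h).left i ⊗ₜ[k] Coalgebra.comul (R := k) ((ℛ k h).right i)) =
      (Coalgebra.counit (R := k) ((ℛ k h).right i) • (ℛ k h).left i) ⊗ₜ[k] (1 : H) := by
    intro i _
    rw [LinearMap.lTensor_tmul, LinearMap.comp_apply,
      HopfAlgebra.mul_antipode_lTensor_comul_apply, Algebra.algebraMap_eq_smul_one,
      TensorProduct.tmul_smul, TensorProduct.smul_tmul']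
  rw [Finset.sum_congr rfl step, ← TensorProduct.sum_tmul,
    counit_smul_sum k H _ _ _ h (ℛ k h).eq.symm]

lemma psi_repr {ι : Type*} (s : Finset ι) (L R : ι → H) (h : H)
    (hr : Coalgebra.comul (R := k) h = ∑ i ∈ s, L i ⊗ₜ[k] R i) (b : A) :
    innerPsi k H A act (h ⊗ₜ[k] b) = ∑ i ∈ s, L i ⊗ₜ[k] act (R i) b := by
  simp only [innerPsi, LinearMap.comp_apply, LinearMap.rTensor_tmul, hr,
    TensorProduct.sum_tmul, map_sum, LinearEquiv.coe_coe, TensorProduct.assoc_tmul,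
    LinearMap.lTensor_tmul, TensorProduct.lift.tmul]

lemma phi_repr {ι : Type*} (s : Finset ι) (L R : ι → H) (h : H)
    (hr : Coalgebra.comul (R := k) h = ∑ i ∈ s, L i ⊗ₜ[k] R i) (b : A) :
    innerPhi k H A act (h ⊗ₜ[k] b) =
      ∑ i ∈ s, act (antipode (R := k) (R i)) b ⊗ₜ[k] L i := by
  simp only [innerPhi, LinearMap.comp_apply, LinearMap.rTensor_tmul, hr,
    TensorProduct.sum_tmul, map_sum, LinearEquiv.coe_coe, TensorProduct.comm_tmul,
    TensorProduct.assoc_tmul, LinearMap.lTensor_tmul, TensorProduct.assoc_symm_tmul,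
    TensorProduct.lift.tmul]

/-- `γ₂ ⊗ (γ₃ ⊗ γ₄) ↦ (w1·γ₂ ▷ d) · ((w2·γ₃·τγ₄) ▷ b)`. -/
def XiInner (w1 w2 : H) (d b : A) : H ⊗[k] (H ⊗[k] H) →ₗ[k] A :=
  (LinearMap.mul' k A).comp
    (TensorProduct.map ((act.flip d).comp (LinearMap.mulLeft k w1))
      ((act.flip b).comp ((LinearMap.mulLeft k w2).comp
        ((LinearMap.mul' k H).comp (LinearMap.lTensor H (antipode (R := k)))))))

lemma XiInner_tmul (w1 w2 γ₂ γ₃ γ₄ : H) (d b : A) :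
    XiInner k H A act w1 w2 d b (γ₂ ⊗ₜ[k] (γ₃ ⊗ₜ[k] γ₄)) =
      act (w1 * γ₂) d * act (w2 * (γ₃ * antipode (R := k) γ₄)) b := by
  simp [XiInner]

def XiAux (v : A) (u w1 w2 : H) (d b : A) :
    H ⊗[k] (H ⊗[k] (H ⊗[k] H)) →ₗ[k] A ⊗[k] (H ⊗[k] A) :=
  ((TensorProduct.mk k A (H ⊗[k] A)) v).comp
    (TensorProduct.map (LinearMap.mulLeft k u) (XiInner k H A act w1 w2 d b))

lemma XiAux_apply (v : A) (u w1 w2 : H) (d b : A) (γ₁ : H) (T : H ⊗[k] (H ⊗[k] H)) :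
    XiAux k H A act v u w1 w2 d b (γ₁ ⊗ₜ[k] T) =
      v ⊗ₜ[k] ((u * γ₁) ⊗ₜ[k] XiInner k H A act w1 w2 d b T) := by
  simp [XiAux]

lemma XiAux_tmul (v : A) (u w1 w2 : H) (d b : A) (γ₁ γ₂ γ₃ γ₄ : H) :
    XiAux k H A act v u w1 w2 d b (γ₁ ⊗ₜ[k] (γ₂ ⊗ₜ[k] (γ₃ ⊗ₜ[k] γ₄))) =
      v ⊗ₜ[k] ((u * γ₁) ⊗ₜ[k]
        (act (w1 * γ₂) d * act (w2 * (γ₃ * antipode (R := k) γ₄)) b)) := by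
  rw [XiAux_apply, XiInner_tmul]

lemma XiInner_D2 (w1 w2 : H) (d b : A) (y : H) :
    XiInner k H A act w1 w2 d b (D2Map k H y) = act (w1 * y) d * act w2 b := by
  have hρ : Coalgebra.comul (R := k) y =
      ∑ r ∈ (ℛ k y).index, (ℛ k y).left r ⊗ₜ[k] (ℛ k y).right r := (ℛ k y).eq.symm
  have hD : D2Map k H y = ∑ r ∈ (ℛ k y).index,
      (ℛ k y).left r ⊗ₜ[k] (Coalgebra.comul (R := k) ((ℛ k y).right r)) := by
    rw [D2Map, LinearMap.comp_apply, hρ, map_sum]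
    simp only [LinearMap.lTensor_tmul]
  rw [hD, map_sum]
  have step : ∀ r ∈ (ℛ k y).index,
      XiInner k H A act w1 w2 d b
        ((ℛ k y).left r ⊗ₜ[k] (Coalgebra.comul (R := k) ((ℛ k y).right r))) =
      Coalgebra.counit (R := k) ((ℛ k y).right r) •
        (act (w1 * (ℛ k y).left r) d * act w2 b) := by
    intro r _
    simp only [XiInner, LinearMap.comp_apply, TensorProduct.map_tmul,
      HopfAlgebra.mul_antipode_lTensor_comul_apply, LinearMap.mulLeft_apply,
      LinearMap.flip_apply, LinearMap.mul'_apply]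
    rw [← Algebra.commutes, ← Algebra.smul_def, map_smul, LinearMap.smul_apply,
      mul_smul_comm]
  rw [Finset.sum_congr rfl step]
  have e1 : ∑ r ∈ (ℛ k y).index, Coalgebra.counit (R := k) ((ℛ k y).right r) •
      (act (w1 * (ℛ k y).left r) d * act w2 b) =
      (∑ r ∈ (ℛ k y).index, Coalgebra.counit (R := k) ((ℛ k y).right r) •
        act (w1 * (ℛ k y).left r) d) * act w2 b := by
    rw [Finset.sum_mul]
    exact Finset.sum_congr rfl fun r _ => (smul_mul_assoc _ _ _).symm
  rw [e1]
  congr 1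
  have lin : ∑ r ∈ (ℛ k y).index, Coalgebra.counit (R := k) ((ℛ k y).right r) •
      act (w1 * (ℛ k y).left r) d =
      act (w1 * (∑ r ∈ (ℛ k y).index,
        Coalgebra.counit (R := k) ((ℛ k y).right r) • (ℛ k y).left r)) d := by
    rw [Finset.mul_sum, map_sum, LinearMap.sum_apply]
    exact Finset.sum_congr rfl fun r _ => by
      rw [mul_smul_comm, map_smul, LinearMap.smul_apply]
  rw [lin, counit_smul_sum k H _ _ _ y hρ]

/-- `p ⊗ (q ⊗ (r ⊗ s)) ↦ (a·(p▷c)) ⊗ ((q·y) ⊗ ((r·y' ▷ d)·(s ▷ b)))`. -/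
def ThetaAux (a c d b : A) (y y' : H) :
    H ⊗[k] (H ⊗[k] (H ⊗[k] H)) →ₗ[k] A ⊗[k] (H ⊗[k] A) :=
  (LinearMap.lTensor A (LinearMap.lTensor H (LinearMap.mul' k A))).comp
    (TensorProduct.map ((LinearMap.mulLeft k a).comp (act.flip c))
      (TensorProduct.map (LinearMap.mulRight k y)
        (TensorProduct.map ((act.flip d).comp (LinearMap.mulRight k y')) (act.flip b))))

lemma ThetaAux_tmul (a c d b : A) (y y' : H) (p q r s : H) :
    ThetaAux k H A act a c d b y y' (p ⊗ₜ[k] (q ⊗ₜ[k] (r ⊗ₜ[k] s))) =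
      (a * act p c) ⊗ₜ[k] ((q * y) ⊗ₜ[k] (act (r * y') d * act s b)) := by
  simp [ThetaAux]

theorem smash_iso
    (hact_one : ∀ a : A, act 1 a = a)
    (hact_mul : ∀ (h g : H) (a : A), act (h * g) a = act h (act g a))
    (hma : (TensorProduct.lift act).comp (LinearMap.lTensor H (LinearMap.mul' k A)) =
      (LinearMap.mul' k A).comp
        ((TensorProduct.map (TensorProduct.lift act) (TensorProduct.lift act)).comp
          (((TensorProduct.tensorTensorTensorComm k H H A A).toLinearMap).comp
            (LinearMap.rTensor (A ⊗[k] A) (Coalgebra.comul (R := k) (A := H))))))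
    (hunit : ∀ h : H, act h 1 = algebraMap k A (Coalgebra.counit (R := k) h))
    -- the multiplication of `A^e ⋈ H`
    (mulS : (A ⊗[k] (A ⊗[k] H)) →ₗ[k] (A ⊗[k] (A ⊗[k] H)) →ₗ[k] (A ⊗[k] (A ⊗[k] H)))
    (hmulS : ∀ (a b c d : A) (h g : H) (n m : ℕ)
      (h1 h2 : Fin n → H) (g1 g2 : Fin m → H),
      Coalgebra.comul (R := k) h = ∑ i, h1 i ⊗ₜ[k] h2 i →
      Coalgebra.comul (R := k) g = ∑ j, g1 j ⊗ₜ[k] g2 j →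
      mulS (a ⊗ₜ[k] (b ⊗ₜ[k] h)) (c ⊗ₜ[k] (d ⊗ₜ[k] g)) =
        ∑ i, ∑ j,
          (a * act (h1 i) c) ⊗ₜ[k]
            ((d * act (antipode (R := k) (g2 j)) b) ⊗ₜ[k] (h2 i * g1 j)))
    -- the multiplication of `A ⊙ H ⊙ A`
    (mulO : (A ⊗[k] (H ⊗[k] A)) →ₗ[k] (A ⊗[k] (H ⊗[k] A)) →ₗ[k] (A ⊗[k] (H ⊗[k] A)))
    (hmulO : ∀ (a b c d : A) (h g : H) (n : ℕ) (h1 h2 h3 : Fin n → H),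
      (LinearMap.lTensor H (Coalgebra.comul (R := k) (A := H)))
          (Coalgebra.comul (R := k) h) =
        ∑ i, h1 i ⊗ₜ[k] (h2 i ⊗ₜ[k] h3 i) →
      mulO (a ⊗ₜ[k] (h ⊗ₜ[k] b)) (c ⊗ₜ[k] (g ⊗ₜ[k] d)) =
        ∑ i, (a * act (h1 i) c) ⊗ₜ[k] ((h2 i * g) ⊗ₜ[k] (act (h3 i) d * b))) :
    -- conclusion: `Ψ` is an algebra isomorphism with inverse `Φ`
    (PhiMap k H A act).comp (PsiMap k H A act) = LinearMap.id ∧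
    (PsiMap k H A act).comp (PhiMap k H A act) = LinearMap.id ∧
    PsiMap k H A act ((1 : A) ⊗ₜ[k] ((1 : A) ⊗ₜ[k] (1 : H))) =
      (1 : A) ⊗ₜ[k] ((1 : H) ⊗ₜ[k] (1 : A)) ∧
    (∀ z w : A ⊗[k] (A ⊗[k] H),
      PsiMap k H A act (mulS z w) =
        mulO (PsiMap k H A act z) (PsiMap k H A act w)) := by
  have psi_pure : ∀ (x y : A) (h' : H),
      PsiMap k H A act (x ⊗ₜ[k] (y ⊗ₜ[k] h')) = x ⊗ₜ[k] innerPsi k H A act (h' ⊗ₜ[k] y) := by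
    intro x y h'
    simp [PsiMap]
  have phi_pure : ∀ (x : A) (t : H ⊗[k] A),
      PhiMap k H A act (x ⊗ₜ[k] t) = x ⊗ₜ[k] innerPhi k H A act t := by
    intro x t
    simp [PhiMap]
  have psi_pure2 : ∀ (x : A) (S : A ⊗[k] H),
      PsiMap k H A act (x ⊗ₜ[k] S) =
        x ⊗ₜ[k] innerPsi k H A act ((TensorProduct.comm k A H) S) := by
    intro x S
    simp [PsiMap]
  have key1 : ∀ (b : A) (h' : H),
      innerPhi k H A act (innerPsi k H A act (h' ⊗ₜ[k] b)) = b ⊗ₜ[k] h' := by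
    intro b h'
    rw [psi_repr k H A act _ _ _ h' (ℛ k h').eq.symm b, map_sum]
    have e1 : ∀ i ∈ (ℛ k h').index,
        innerPhi k H A act ((ℛ k h').left i ⊗ₜ[k] act ((ℛ k h').right i) b) =
        ∑ j ∈ (ℛ k ((ℛ k h').left i)).index,
          act (antipode (R := k) ((ℛ k ((ℛ k h').left i)).right j) * (ℛ k h').right i) b
            ⊗ₜ[k] (ℛ k ((ℛ k h').left i)).left j := by
      intro i _
      rw [phi_repr k H A act _ _ _ _ (ℛ k ((ℛ k h').left i)).eq.symm]
      exact Finset.sum_congr rfl fun j _ => by rw [← hact_mul]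
    rw [Finset.sum_congr rfl e1]
    have K := congrArg (⇑((LinearMap.rTensor H (act.flip b)).comp
        (TensorProduct.comm k H H).toLinearMap)) (sweedler_r k H h')
    simp only [map_sum, LinearMap.comp_apply, LinearEquiv.coe_coe,
      TensorProduct.comm_tmul, LinearMap.rTensor_tmul, LinearMap.flip_apply] at K
    rw [K, hact_one]
  have key2 : ∀ (b : A) (h' : H),
      innerPsi k H A act ((TensorProduct.comm k A H) (innerPhi k H A act (h' ⊗ₜ[k] b)))
        = h' ⊗ₜ[k] b := by
    intro b h'
    rw [phi_repr k H A act _ _ _ h' (ℛ k h').eq.symm b, map_sum]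
    simp only [TensorProduct.comm_tmul]
    rw [map_sum]
    have e1 : ∀ i ∈ (ℛ k h').index,
        innerPsi k H A act
          ((ℛ k h').left i ⊗ₜ[k] act (antipode (R := k) ((ℛ k h').right i)) b) =
        ∑ j ∈ (ℛ k ((ℛ k h').left i)).index,
          (ℛ k ((ℛ k h').left i)).left j ⊗ₜ[k]
            act ((ℛ k ((ℛ k h').left i)).right j * antipode (R := k) ((ℛ k h').right i)) b := by
      intro i _
      rw [psi_repr k H A act _ _ _ _ (ℛ k ((ℛ k h').left i)).eq.symm]
      exact Finset.sum_congr rfl fun j _ => by rw [hact_mul]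
    rw [Finset.sum_congr rfl e1]
    have K := congrArg (⇑(LinearMap.lTensor H (act.flip b))) (sweedler_l k H h')
    simp only [map_sum, LinearMap.lTensor_tmul, LinearMap.flip_apply] at K
    rw [K, hact_one]
  refine ⟨?_, ?_, ?_, ?_⟩
  · apply LinearMap.ext
    intro z
    induction z using TensorProduct.induction_on with
    | zero => simp
    | add z₁ z₂ h₁ h₂ => simp only [map_add, LinearMap.id_coe, id_eq] at h₁ h₂ ⊢; rw [h₁, h₂]
    | tmul x t =>
      induction t using TensorProduct.induction_on with
      | zero => simp
      | add t₁ t₂ h₁ h₂ =>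
        simp only [TensorProduct.tmul_add, map_add, LinearMap.id_coe, id_eq] at h₁ h₂ ⊢
        rw [h₁, h₂]
      | tmul y h'' =>
        rw [LinearMap.comp_apply, psi_pure, phi_pure, key1, LinearMap.id_apply]
  · apply LinearMap.ext
    intro z
    induction z using TensorProduct.induction_on with
    | zero => simp
    | add z₁ z₂ h₁ h₂ => simp only [map_add, LinearMap.id_coe, id_eq] at h₁ h₂ ⊢; rw [h₁, h₂]
    | tmul x t =>
      induction t using TensorProduct.induction_on with
      | zero => simp
      | add t₁ t₂ h₁ h₂ =>
        simp only [TensorProduct.tmul_add, map_add, LinearMap.id_coe, id_eq] at h₁ h₂ ⊢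
        rw [h₁, h₂]
      | tmul h'' y =>
        rw [LinearMap.comp_apply, phi_pure, psi_pure2, key2, LinearMap.id_apply]
  · rw [psi_pure]
    congr 1
    rw [psi_repr k H A act {0} (fun _ : ℕ => (1 : H)) (fun _ => (1 : H)) 1
      (by simp [Bialgebra.comul_one, Algebra.TensorProduct.one_def]) 1]
    simp [hact_one]
  · -- multiplicativity
    have hprodP : ∀ (x y : H) (rx : Coalgebra.Repr k x (H × H)) (ry : Coalgebra.Repr k y (H × H)),
        Coalgebra.comul (R := k) (x * y) = ∑ pq ∈ rx.index ×ˢ ry.index,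
          (rx.left pq.1 * ry.left pq.2) ⊗ₜ[k] (rx.right pq.1 * ry.right pq.2) := by
      intro x y rx ry
      rw [Bialgebra.comul_mul, ← rx.eq, ← ry.eq, Finset.sum_mul_sum, Finset.sum_product]
      simp [Algebra.TensorProduct.tmul_mul_tmul]
    have act_prodP : ∀ (x y : H) (rx : Coalgebra.Repr k x (H × H)) (ry : Coalgebra.Repr k y (H × H))
        (xx yy : A),
        act (x * y) (xx * yy) = ∑ pq ∈ rx.index ×ˢ ry.index,
          act (rx.left pq.1 * ry.left pq.2) xx * act (rx.right pq.1 * ry.right pq.2) yy := by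
      intro x y rx ry xx yy
      have e := LinearMap.congr_fun hma ((x * y) ⊗ₜ[k] (xx ⊗ₜ[k] yy))
      simp only [LinearMap.comp_apply, LinearMap.lTensor_tmul, LinearMap.mul'_apply,
        TensorProduct.lift.tmul, LinearMap.rTensor_tmul, hprodP x y rx ry,
        TensorProduct.sum_tmul, map_sum, LinearEquiv.coe_coe,
        TensorProduct.tensorTensorTensorComm_tmul, TensorProduct.map_tmul] at e
      exact e
    have key4 : ∀ (a b c d : A) (h g : H),
        PsiMap k H A act (mulS (a ⊗ₜ[k] (b ⊗ₜ[k] h)) (c ⊗ₜ[k] (d ⊗ₜ[k] g))) =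
        mulO (PsiMap k H A act (a ⊗ₜ[k] (b ⊗ₜ[k] h)))
          (PsiMap k H A act (c ⊗ₜ[k] (d ⊗ₜ[k] g))) := by
      intro a b c d h g
      obtain ⟨n, x1, x2, hx⟩ := exists_fin_rep (Coalgebra.comul (R := k) h)
      obtain ⟨m, y1, y2, hy⟩ := exists_fin_rep (Coalgebra.comul (R := k) g)
      choose N f1 f2 f3 hf using fun i : Fin n =>
        exists_fin_rep₃ ((LinearMap.lTensor H (Coalgebra.comul (R := k)))
          (Coalgebra.comul (R := k) (x1 i)))
      have u : ∀ i : Fin n, Coalgebra.Repr k (x2 i) (H × H) := fun i => ℛ k (x2 i)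
      have v : ∀ j : Fin m, Coalgebra.Repr k (y1 j) (H × H) := fun j => ℛ k (y1 j)
      have wre : ∀ (i : Fin n) (p : H × H), Coalgebra.Repr k ((u i).right p) (H × H) :=
        fun i p => ℛ k ((u i).right p)
      have zre : ∀ (j : Fin m) (q : H × H), Coalgebra.Repr k ((v j).right q) (H × H) :=
        fun j q => ℛ k ((v j).right q)
      -- the canonical 3-fold coproduct of `h`, and the two tree facts
      have hShR : (∑ i, ∑ p ∈ (u i).index, ∑ s ∈ (wre i p).index,
            x1 i ⊗ₜ[k] ((u i).left p ⊗ₜ[k] ((wre i p).left s ⊗ₜ[k] (wre i p).right s)))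
          = (LinearMap.lTensor H (D2Map k H)) (Coalgebra.comul (R := k) h) := by
        rw [hx, map_sum]
        refine Finset.sum_congr rfl fun i _ => ?_
        rw [LinearMap.lTensor_tmul]
        have e : D2Map k H (x2 i) = ∑ p ∈ (u i).index, ∑ s ∈ (wre i p).index,
            (u i).left p ⊗ₜ[k] ((wre i p).left s ⊗ₜ[k] (wre i p).right s) := by
          rw [D2Map, LinearMap.comp_apply, ← (u i).eq, map_sum]
          refine Finset.sum_congr rfl fun p _ => ?_
          rw [LinearMap.lTensor_tmul, ← (wre i p).eq, TensorProduct.tmul_sum]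
        rw [e, TensorProduct.tmul_sum]
        exact Finset.sum_congr rfl fun p _ => by rw [TensorProduct.tmul_sum]
      have hShL : (∑ i, ∑ s, f1 i s ⊗ₜ[k] (f2 i s ⊗ₜ[k] (f3 i s ⊗ₜ[k] x2 i)))
          = (LinearMap.lTensor H (D2Map k H)) (Coalgebra.comul (R := k) h) := by
        have e1 : ∀ i : Fin n,
            (∑ s, f1 i s ⊗ₜ[k] (f2 i s ⊗ₜ[k] (f3 i s ⊗ₜ[k] x2 i)))
            = BetaMap k H ((D2Map k H (x1 i)) ⊗ₜ[k] x2 i) := by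
          intro i
          rw [show D2Map k H (x1 i) = (LinearMap.lTensor H (Coalgebra.comul (R := k)))
              (Coalgebra.comul (R := k) (x1 i)) from rfl, hf i,
            TensorProduct.sum_tmul, map_sum]
          refine Finset.sum_congr rfl fun s _ => ?_
          rw [BetaMap_tmul, TensorProduct.assoc_tmul]
        rw [Finset.sum_congr rfl (fun i _ => e1 i)]
        have e2 : (∑ i, BetaMap k H (D2Map k H (x1 i) ⊗ₜ[k] x2 i))
            = BetaMap k H ((LinearMap.rTensor H (D2Map k H)) (Coalgebra.comul (R := k) h)) := by
          rw [hx, map_sum, map_sum]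
          exact Finset.sum_congr rfl fun i _ => by rw [LinearMap.rTensor_tmul]
        rw [e2, coassoc4]
      -- g-side tree fact
      have hG : ∀ j : Fin m,
          (∑ q ∈ (v j).index, ∑ t ∈ (zre j q).index,
            (v j).left q ⊗ₜ[k] ((zre j q).left t ⊗ₜ[k] ((zre j q).right t ⊗ₜ[k] y2 j)))
          = BetaMap k H (D2Map k H (y1 j) ⊗ₜ[k] y2 j) := by
        intro j
        rw [show D2Map k H (y1 j) = (LinearMap.lTensor H (Coalgebra.comul (R := k)))
            (Coalgebra.comul (R := k) (y1 j)) from rfl, ← (v j).eq, map_sum]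
        simp only [LinearMap.lTensor_tmul]
        rw [TensorProduct.sum_tmul, map_sum]
        refine Finset.sum_congr rfl fun q _ => ?_
        rw [BetaMap_tmul, ← (zre j q).eq, TensorProduct.sum_tmul, map_sum,
          TensorProduct.tmul_sum]
        exact Finset.sum_congr rfl fun t _ => by rw [TensorProduct.assoc_tmul]
      have hCg : (∑ j, BetaMap k H (D2Map k H (y1 j) ⊗ₜ[k] y2 j))
          = (LinearMap.lTensor H (D2Map k H)) (Coalgebra.comul (R := k) g) := by
        have e : (∑ j, BetaMap k H (D2Map k H (y1 j) ⊗ₜ[k] y2 j))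
            = BetaMap k H ((LinearMap.rTensor H (D2Map k H)) (Coalgebra.comul (R := k) g)) := by
          rw [hy, map_sum, map_sum]
          exact Finset.sum_congr rfl fun j _ => by rw [LinearMap.rTensor_tmul]
        rw [e, coassoc4]
      have hXiC : ∀ (vv : A) (uu ww1 ww2 : H),
          XiAux k H A act vv uu ww1 ww2 d b
            ((LinearMap.lTensor H (D2Map k H)) (Coalgebra.comul (R := k) g)) =
          ∑ j, vv ⊗ₜ[k] ((uu * y1 j) ⊗ₜ[k] (act (ww1 * y2 j) d * act ww2 b)) := by
        intro vv uu ww1 ww2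
        rw [hy, map_sum, map_sum]
        refine Finset.sum_congr rfl fun j _ => ?_
        rw [LinearMap.lTensor_tmul, XiAux_apply, XiInner_D2]
      -- LHS
      have hL : PsiMap k H A act (mulS (a ⊗ₜ[k] (b ⊗ₜ[k] h)) (c ⊗ₜ[k] (d ⊗ₜ[k] g))) =
          (∑ j, ThetaAux k H A act a c d b (y1 j) (y2 j))
            ((LinearMap.lTensor H (D2Map k H)) (Coalgebra.comul (R := k) h)) := by
        rw [hmulS a b c d h g n m x1 x2 y1 y2 hx hy, map_sum]
        have step1 : ∀ i : Fin n,
            (PsiMap k H A act (∑ j, (a * act (x1 i) c) ⊗ₜ[k]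
              ((d * act (antipode (R := k) (y2 j)) b) ⊗ₜ[k] (x2 i * y1 j))))
            = ∑ j, (a * act (x1 i) c) ⊗ₜ[k] innerPsi k H A act
                ((x2 i * y1 j) ⊗ₜ[k] (d * act (antipode (R := k) (y2 j)) b)) := by
          intro i
          rw [map_sum]
          exact Finset.sum_congr rfl fun j _ => psi_pure _ _ _
        rw [Finset.sum_congr rfl (fun i _ => step1 i)]
        have step2 : ∀ (i : Fin n) (j : Fin m),
            (a * act (x1 i) c) ⊗ₜ[k] innerPsi k H A act
                ((x2 i * y1 j) ⊗ₜ[k] (d * act (antipode (R := k) (y2 j)) b))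
            = ∑ p ∈ (u i).index, ∑ s ∈ (wre i p).index,
                XiAux k H A act (a * act (x1 i) c) ((u i).left p)
                  ((wre i p).left s) ((wre i p).right s) d b
                  (BetaMap k H (D2Map k H (y1 j) ⊗ₜ[k] y2 j)) := by
          intro i j
          rw [psi_repr k H A act ((u i).index ×ˢ (v j).index)
            (fun pq => (u i).left pq.1 * (v j).left pq.2)
            (fun pq => (u i).right pq.1 * (v j).right pq.2) _
            (hprodP (x2 i) (y1 j) (u i) (v j)) _, TensorProduct.tmul_sum]
          have e1 : ∀ pq ∈ (u i).index ×ˢ (v j).index,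
              (a * act (x1 i) c) ⊗ₜ[k]
                (((u i).left pq.1 * (v j).left pq.2) ⊗ₜ[k]
                  act ((u i).right pq.1 * (v j).right pq.2)
                    (d * act (antipode (R := k) (y2 j)) b))
              = ∑ st ∈ (wre i pq.1).index ×ˢ (zre j pq.2).index,
                  XiAux k H A act (a * act (x1 i) c) ((u i).left pq.1)
                    ((wre i pq.1).left st.1) ((wre i pq.1).right st.1) d b
                    ((v j).left pq.2 ⊗ₜ[k] ((zre j pq.2).left st.2 ⊗ₜ[k]
                      ((zre j pq.2).right st.2 ⊗ₜ[k] y2 j))) := by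
            intro pq _
            rw [act_prodP ((u i).right pq.1) ((v j).right pq.2) (wre i pq.1) (zre j pq.2)
              d (act (antipode (R := k) (y2 j)) b), TensorProduct.tmul_sum,
              TensorProduct.tmul_sum]
            refine Finset.sum_congr rfl fun st _ => ?_
            rw [XiAux_tmul, ← hact_mul, mul_assoc]
          rw [Finset.sum_congr rfl e1]
          -- now split the product index sets and commute
          rw [Finset.sum_product]
          have e2 : ∀ p ∈ (u i).index,
              (∑ q ∈ (v j).index, ∑ st ∈ (wre i p).index ×ˢ (zre j q).index,
                XiAux k H A act (a * act (x1 i) c) ((u i).left p)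
                  ((wre i p).left st.1) ((wre i p).right st.1) d b
                  ((v j).left q ⊗ₜ[k] ((zre j q).left st.2 ⊗ₜ[k]
                    ((zre j q).right st.2 ⊗ₜ[k] y2 j))))
              = ∑ s ∈ (wre i p).index,
                  XiAux k H A act (a * act (x1 i) c) ((u i).left p)
                    ((wre i p).left s) ((wre i p).right s) d b
                    (∑ q ∈ (v j).index, ∑ t ∈ (zre j q).index,
                      (v j).left q ⊗ₜ[k] ((zre j q).left t ⊗ₜ[k]
                        ((zre j q).right t ⊗ₜ[k] y2 j))) := by
            intro p _
            have e3 : ∀ q ∈ (v j).index,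
                (∑ st ∈ (wre i p).index ×ˢ (zre j q).index,
                  XiAux k H A act (a * act (x1 i) c) ((u i).left p)
                    ((wre i p).left st.1) ((wre i p).right st.1) d b
                    ((v j).left q ⊗ₜ[k] ((zre j q).left st.2 ⊗ₜ[k]
                      ((zre j q).right st.2 ⊗ₜ[k] y2 j))))
                = ∑ s ∈ (wre i p).index, ∑ t ∈ (zre j q).index,
                    XiAux k H A act (a * act (x1 i) c) ((u i).left p)
                      ((wre i p).left s) ((wre i p).right s) d b
                      ((v j).left q ⊗ₜ[k] ((zre j q).left t ⊗ₜ[k]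
                        ((zre j q).right t ⊗ₜ[k] y2 j))) := by
              intro q _
              rw [Finset.sum_product]
            rw [Finset.sum_congr rfl e3, Finset.sum_comm]
            refine Finset.sum_congr rfl fun s _ => ?_
            rw [map_sum]
            exact Finset.sum_congr rfl fun q _ => by rw [map_sum]
          rw [Finset.sum_congr rfl e2]
          refine Finset.sum_congr rfl fun p _ => Finset.sum_congr rfl fun s _ => ?_
          rw [hG j]
        rw [Finset.sum_congr rfl (fun i _ => Finset.sum_congr rfl fun j _ => step2 i j)]
        -- commute `j` inwards
        have e4 : ∀ i : Fin n,
            (∑ j, ∑ p ∈ (u i).index, ∑ s ∈ (wre i p).index,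
              XiAux k H A act (a * act (x1 i) c) ((u i).left p)
                ((wre i p).left s) ((wre i p).right s) d b
                (BetaMap k H (D2Map k H (y1 j) ⊗ₜ[k] y2 j)))
            = ∑ p ∈ (u i).index, ∑ s ∈ (wre i p).index,
                XiAux k H A act (a * act (x1 i) c) ((u i).left p)
                  ((wre i p).left s) ((wre i p).right s) d b
                  ((LinearMap.lTensor H (D2Map k H)) (Coalgebra.comul (R := k) g)) := by
          intro i
          rw [Finset.sum_comm]
          refine Finset.sum_congr rfl fun p _ => ?_
          rw [Finset.sum_comm]
          refine Finset.sum_congr rfl fun s _ => ?_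
          rw [← map_sum, hCg]
        rw [Finset.sum_congr rfl (fun i _ => e4 i)]
        have e5 : ∀ (i : Fin n), ∀ p ∈ (u i).index, ∀ s ∈ (wre i p).index,
            XiAux k H A act (a * act (x1 i) c) ((u i).left p)
              ((wre i p).left s) ((wre i p).right s) d b
              ((LinearMap.lTensor H (D2Map k H)) (Coalgebra.comul (R := k) g))
            = (∑ j, ThetaAux k H A act a c d b (y1 j) (y2 j))
                (x1 i ⊗ₜ[k] ((u i).left p ⊗ₜ[k] ((wre i p).left s ⊗ₜ[k] (wre i p).right s))) := by
          intro i p _ s _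
          rw [hXiC, LinearMap.sum_apply]
          exact Finset.sum_congr rfl fun j _ => by rw [ThetaAux_tmul]
        rw [Finset.sum_congr rfl (fun i _ => Finset.sum_congr rfl fun p hp =>
          Finset.sum_congr rfl fun s hs => e5 i p hp s hs)]
        rw [← hShR]
        rw [map_sum]
        refine Finset.sum_congr rfl fun i _ => ?_
        rw [map_sum]
        exact Finset.sum_congr rfl fun p _ => by rw [map_sum]
      -- RHS
      have hR : mulO (PsiMap k H A act (a ⊗ₜ[k] (b ⊗ₜ[k] h)))
            (PsiMap k H A act (c ⊗ₜ[k] (d ⊗ₜ[k] g))) =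
          (∑ j, ThetaAux k H A act a c d b (y1 j) (y2 j))
            ((LinearMap.lTensor H (D2Map k H)) (Coalgebra.comul (R := k) h)) := by
        have hΨz : PsiMap k H A act (a ⊗ₜ[k] (b ⊗ₜ[k] h)) =
            ∑ i, a ⊗ₜ[k] (x1 i ⊗ₜ[k] act (x2 i) b) := by
          rw [psi_pure, psi_repr k H A act Finset.univ x1 x2 h hx b, TensorProduct.tmul_sum]
        have hΨw : PsiMap k H A act (c ⊗ₜ[k] (d ⊗ₜ[k] g)) =
            ∑ j, c ⊗ₜ[k] (y1 j ⊗ₜ[k] act (y2 j) d) := by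
          rw [psi_pure, psi_repr k H A act Finset.univ y1 y2 g hy d, TensorProduct.tmul_sum]
        rw [hΨz, hΨw]
        have expand : mulO (∑ i, a ⊗ₜ[k] (x1 i ⊗ₜ[k] act (x2 i) b))
              (∑ j, c ⊗ₜ[k] (y1 j ⊗ₜ[k] act (y2 j) d))
            = ∑ i, ∑ j, mulO (a ⊗ₜ[k] (x1 i ⊗ₜ[k] act (x2 i) b))
                (c ⊗ₜ[k] (y1 j ⊗ₜ[k] act (y2 j) d)) := by
          simp only [map_sum, LinearMap.sum_apply]
          exact Finset.sum_comm
        rw [expand]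
        have e1 : ∀ (i : Fin n), ∀ j ∈ (Finset.univ : Finset (Fin m)),
            mulO (a ⊗ₜ[k] (x1 i ⊗ₜ[k] act (x2 i) b)) (c ⊗ₜ[k] (y1 j ⊗ₜ[k] act (y2 j) d))
            = ∑ s, (a * act (f1 i s) c) ⊗ₜ[k]
                ((f2 i s * y1 j) ⊗ₜ[k] (act (f3 i s) (act (y2 j) d) * act (x2 i) b)) := by
          intro i j _
          exact hmulO a (act (x2 i) b) c (act (y2 j) d) (x1 i) (y1 j) (N i)
              (f1 i) (f2 i) (f3 i) (hf i)
        rw [Finset.sum_congr rfl (fun i _ => Finset.sum_congr rfl (e1 i))]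
        have e2 : ∀ (i : Fin n) (j : Fin m) (s : Fin (N i)),
            (a * act (f1 i s) c) ⊗ₜ[k]
              ((f2 i s * y1 j) ⊗ₜ[k] (act (f3 i s) (act (y2 j) d) * act (x2 i) b))
            = ThetaAux k H A act a c d b (y1 j) (y2 j)
                (f1 i s ⊗ₜ[k] (f2 i s ⊗ₜ[k] (f3 i s ⊗ₜ[k] x2 i))) := by
          intro i j s
          rw [ThetaAux_tmul, hact_mul]
        rw [Finset.sum_congr rfl (fun i _ => Finset.sum_congr rfl fun j _ =>
          Finset.sum_congr rfl fun s _ => e2 i j s)]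
        have e3 : ∀ i : Fin n,
            (∑ j, ∑ s, ThetaAux k H A act a c d b (y1 j) (y2 j)
              (f1 i s ⊗ₜ[k] (f2 i s ⊗ₜ[k] (f3 i s ⊗ₜ[k] x2 i))))
            = ∑ s, (∑ j, ThetaAux k H A act a c d b (y1 j) (y2 j))
                (f1 i s ⊗ₜ[k] (f2 i s ⊗ₜ[k] (f3 i s ⊗ₜ[k] x2 i))) := by
          intro i
          rw [Finset.sum_comm]
          exact Finset.sum_congr rfl fun s _ => by rw [LinearMap.sum_apply]
        rw [Finset.sum_congr rfl (fun i _ => e3 i), ← hShL, map_sum]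
        exact Finset.sum_congr rfl fun i _ => by rw [map_sum]
      rw [hL, hR]
    intro z w
    induction z using TensorProduct.induction_on with
    | zero => simp
    | add z₁ z₂ h₁ h₂ => simp only [map_add, LinearMap.add_apply, h₁, h₂]
    | tmul a t =>
      induction t using TensorProduct.induction_on with
      | zero => simp
      | add t₁ t₂ h₁ h₂ =>
        simp only [TensorProduct.tmul_add, map_add, LinearMap.add_apply, h₁, h₂]
      | tmul b h =>
        induction w using TensorProduct.induction_on with
        | zero => simp
        | add w₁ w₂ h₁ h₂ => simp only [map_add, h₁, h₂]
        | tmul c s =>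
          induction s using TensorProduct.induction_on with
          | zero => simp
          | add s₁ s₂ h₁ h₂ =>
            simp only [TensorProduct.tmul_add, map_add, h₁, h₂]
          | tmul d g => exact key4 a b c d h g

end
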